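/- Let D be an n×n positive definite diagonal matrix, and let A, Ã, Â be symmetric n×n matrices with 0 ⪯ Â ⪯ D. If e^{-ε}(D - Ã) ⪯ D - A ⪯ e^{ε}(D - Ã), then e^{-ε}(D - Â D⁻¹ Ã D⁻¹ Â) ⪯ D - Â D⁻¹ A D⁻¹ Â ⪯ e^{ε}(D - Â D⁻¹ Ã D⁻¹ Â). -/

import Mathlib

open Matrix

private lemma psd_smul {n : ℕ} {M : Matrix (Fin n) (Fin n) ℝ} (hM : M.PosSemidef)
    {c : ℝ} (hc : 0 ≤ c) : (c • M).PosSemidef := by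
  refine Matrix.PosSemidef.of_dotProduct_mulVec_nonneg ?_ (fun x => ?_)
  · unfold Matrix.IsHermitian
    rw [conjTranspose_smul, hM.1.eq]
    simp
  · rw [smul_mulVec, dotProduct_smul, smul_eq_mul]
    exact mul_nonneg hc (hM.dotProduct_mulVec_nonneg x)

private lemma symdot {n : ℕ} {M : Matrix (Fin n) (Fin n) ℝ} (hM : M.IsHermitian)
    (x y : Fin n → ℝ) : x ⬝ᵥ (M *ᵥ y) = (M *ᵥ x) ⬝ᵥ y := by
  have ht : Mᵀ = M := by
    ext i j
    have := congrFun (congrFun hM.eq i) j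
    simpa using this
  rw [dotProduct_mulVec, ← mulVec_transpose, ht]

private lemma key {n : ℕ} {D Ah : Matrix (Fin n) (Fin n) ℝ} (hD : D.PosDef)
    (hAh0 : Ah.PosSemidef) (hAhD : (D - Ah).PosSemidef) :
    (D - Ah * D⁻¹ * Ah).PosSemidef := by
  have hDs : D.IsHermitian := hD.isHermitian
  have hAhs : Ah.IsHermitian := hAh0.isHermitian
  have hdet : IsUnit D.det := isUnit_iff_ne_zero.mpr hD.det_pos.ne'
  have hDD : D * D⁻¹ = 1 := mul_nonsing_inv D hdet
  have hDinvs : D⁻¹.IsHermitian := hDs.inv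
  refine Matrix.PosSemidef.of_dotProduct_mulVec_nonneg ?_ ?_
  · unfold Matrix.IsHermitian
    rw [conjTranspose_sub, hDs.eq, conjTranspose_mul, conjTranspose_mul,
      hAhs.eq, hDinvs.eq, mul_assoc]
  · intro x
    set y : Fin n → ℝ := D⁻¹ *ᵥ (Ah *ᵥ x) with hy
    have hDy : D *ᵥ y = Ah *ᵥ x := by
      rw [hy, mulVec_mulVec, mulVec_mulVec, hDD, Matrix.one_mul]
    have hxy : x ⬝ᵥ (Ah *ᵥ y) = y ⬝ᵥ (D *ᵥ y) := by
      rw [symdot hAhs, hDy, ← hDy, dotProduct_comm]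
    have hq : x ⬝ᵥ ((Ah * D⁻¹ * Ah) *ᵥ x) = y ⬝ᵥ (D *ᵥ y) := by
      rw [mul_assoc, ← mulVec_mulVec, ← mulVec_mulVec, ← hy, hxy]
    have h1 := hAhD.dotProduct_mulVec_nonneg y
    have h2 := hAh0.dotProduct_mulVec_nonneg (x - y)
    have h3 := hAhD.dotProduct_mulVec_nonneg x
    simp only [star_trivial, sub_mulVec, dotProduct_sub, sub_dotProduct, mulVec_sub,
      sub_nonneg] at h1 h2 h3 ⊢
    rw [hq]
    have hyx : y ⬝ᵥ (Ah *ᵥ x) = x ⬝ᵥ (Ah *ᵥ y) := by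
      rw [symdot hAhs, dotProduct_comm]
    rw [hyx, hxy] at h2
    linarith

theorem stmt_7 (n : ℕ) (D A At Ah : Matrix (Fin n) (Fin n) ℝ)
    (hD : D.PosDef) (hDdiag : D.IsDiag)
    (hA : A.IsSymm) (hAt : At.IsSymm) (hAh : Ah.IsSymm)
    (hAh0 : Ah.PosSemidef) (hAhD : (D - Ah).PosSemidef)
    (ε : ℝ) (hε : 0 ≤ ε)
    (h1 : ((D - A) - Real.exp (-ε) • (D - At)).PosSemidef)
    (h2 : (Real.exp ε • (D - At) - (D - A)).PosSemidef) :
    ((D - Ah * D⁻¹ * A * D⁻¹ * Ah) - Real.exp (-ε) • (D - Ah * D⁻¹ * At * D⁻¹ * Ah)).PosSemidef ∧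
      (Real.exp ε • (D - Ah * D⁻¹ * At * D⁻¹ * Ah) - (D - Ah * D⁻¹ * A * D⁻¹ * Ah)).PosSemidef := by
  have hK := key hD hAh0 hAhD
  have hdet : IsUnit D.det := isUnit_iff_ne_zero.mpr hD.det_pos.ne'
  have hDiD : D⁻¹ * D = 1 := nonsing_inv_mul D hdet
  have hBt : (Ah * D⁻¹)ᴴ = D⁻¹ * Ah := by
    rw [conjTranspose_mul, hD.isHermitian.inv.eq, hAh0.isHermitian.eq]
  have conj : ∀ X : Matrix (Fin n) (Fin n) ℝ,
      (Ah * D⁻¹) * (D - X) * (D⁻¹ * Ah) = Ah * D⁻¹ * Ah - Ah * D⁻¹ * X * (D⁻¹ * Ah) := by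
    intro X
    rw [Matrix.mul_sub, Matrix.sub_mul]
    congr 1
    rw [mul_assoc Ah D⁻¹ D, hDiD, mul_one, mul_assoc]
  constructor
  · have e1 : (D - Ah * D⁻¹ * A * D⁻¹ * Ah) - Real.exp (-ε) • (D - Ah * D⁻¹ * At * D⁻¹ * Ah)
        = (1 - Real.exp (-ε)) • (D - Ah * D⁻¹ * Ah)
          + (Ah * D⁻¹) * ((D - A) - Real.exp (-ε) • (D - At)) * (Ah * D⁻¹)ᴴ := by
      rw [hBt, Matrix.mul_sub (Ah * D⁻¹), Matrix.mul_smul, Matrix.sub_mul, Matrix.smul_mul,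
        conj, conj]
      simp only [smul_sub, sub_smul, one_smul, mul_assoc]
      abel
    rw [e1]
    exact (psd_smul hK (by simp [Real.exp_le_one_iff.mpr (neg_nonpos.mpr hε)])).add
      (h1.mul_mul_conjTranspose_same _)
  · have e2 : Real.exp ε • (D - Ah * D⁻¹ * At * D⁻¹ * Ah) - (D - Ah * D⁻¹ * A * D⁻¹ * Ah)
        = (Real.exp ε - 1) • (D - Ah * D⁻¹ * Ah)
          + (Ah * D⁻¹) * (Real.exp ε • (D - At) - (D - A)) * (Ah * D⁻¹)ᴴ := by
      rw [hBt, Matrix.mul_sub (Ah * D⁻¹), Matrix.mul_smul, Matrix.sub_mul, Matrix.smul_mul,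
        conj, conj]
      simp only [smul_sub, sub_smul, one_smul, mul_assoc]
      abel
    rw [e2]
    exact (psd_smul hK (by simp [Real.one_le_exp hε])).add (h2.mul_mul_conjTranspose_same _)
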